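/- Let λ and ν be dominant G2 weights, and let w be an element of the Weyl group W of G2 such that w(ν − λ) is dominant. Then there exists a path from λ to ν, and the minimal length of a path from λ to ν equals (w(ν−λ))₁ + (w(ν−λ))₂, i.e. it equals the minimal length of a path from 0 to w(ν − λ). -/

import Mathlib

/-- The `G₂` weight lattice is realized inside `ℤ³` (triples with coordinate
sum zero), encoded here as `ℤ × ℤ × ℤ`. -/
abbrev G2W : Type := ℤ × ℤ × ℤ

/-- The standard inner product of `ℝ³`, restricted to integer triples. -/
def g2ip (x y : G2W) : ℤ := x.1 * y.1 + x.2.1 * y.2.1 + x.2.2 * y.2.2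

/-- The six short roots of `G₂`. -/
def g2ShortRoots : Set G2W :=
  {(1, -1, 0), (-1, 1, 0), (0, 1, -1), (0, -1, 1), (1, 0, -1), (-1, 0, 1)}

/-- The six long roots of `G₂`. -/
def g2LongRoots : Set G2W :=
  {(2, -1, -1), (-2, 1, 1), (-1, 2, -1), (1, -2, 1), (-1, -1, 2), (1, 1, -2)}

/-- The twelve roots of `G₂`. -/
def g2Roots : Set G2W := g2ShortRoots ∪ g2LongRoots

/-- The Weyl vector `ρ = (2, 1, -3)` of `G₂`. -/
def g2rho : G2W := (2, 1, -3)

/-- A weight `x` in the lattice is dominant if `x₁ ≥ x₂ ≥ 0 ≥ x₃`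
(and `x₁ + x₂ + x₃ = 0`). -/
def G2Dominant (x : G2W) : Prop :=
  x.1 + x.2.1 + x.2.2 = 0 ∧ x.2.1 ≤ x.1 ∧ 0 ≤ x.2.1 ∧ x.2.2 ≤ 0

/-- Edge `μ → δ` of the tensor-product graph for the 7-dimensional
representation `V` of `G₂`: both weights are dominant and either `δ - μ` is a
short root, or `δ = μ` and `μ₁ > μ₂`. -/
def G2Edge (μ δ : G2W) : Prop :=
  G2Dominant μ ∧ G2Dominant δ ∧
    (δ - μ ∈ g2ShortRoots ∨ (δ = μ ∧ μ.2.1 < μ.1))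

/-- `t` is a path of length `n` from `lam` to `nu`: a sequence of dominant
weights starting at `lam`, ending at `nu`, with an edge at each step. -/
def G2IsPath (t : ℕ → G2W) (n : ℕ) (lam nu : G2W) : Prop :=
  t 0 = lam ∧ t n = nu ∧ ∀ i < n, G2Edge (t i) (t (i + 1))

/-- Rational 3-space, on which the Weyl group of `G₂` acts. -/
abbrev G2Q : Type := ℚ × ℚ × ℚ

/-- The standard inner product on `ℚ³`. -/
def g2ipQ (x y : G2Q) : ℚ := x.1 * y.1 + x.2.1 * y.2.1 + x.2.2 * y.2.2

/-- The embedding of the integral weight lattice into `ℚ³`. -/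
def g2toQ (x : G2W) : G2Q := ((x.1 : ℚ), (x.2.1 : ℚ), (x.2.2 : ℚ))

/-- The reflection `s_α : x ↦ x - (2(x,α)/(α,α))·α` in the root `α`. -/
def g2Reflection (α : G2Q) : G2Q → G2Q :=
  fun x => x - (2 * g2ipQ x α / g2ipQ α α) • α

/-- The Weyl group `W` of `G₂`, realized (as reflections are involutions) as
the submonoid of `Function.End ℚ³` generated by the reflections `s_α` in the
twelve roots of `G₂`. -/
def g2Weyl : Submonoid (Function.End G2Q) :=
  Submonoid.closure {f | ∃ α ∈ g2Roots, f = g2Reflection (g2toQ α)}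


-- ===== auxiliary arithmetic core for the step lemma =====
theorem g2StepCore (l1 l2 l3 n1 n2 n3 m : ℤ)
    (hl : l1 + l2 + l3 = 0 ∧ l2 ≤ l1 ∧ 0 ≤ l2 ∧ l3 ≤ 0)
    (hn : n1 + n2 + n3 = 0 ∧ n2 ≤ n1 ∧ 0 ≤ n2 ∧ n3 ≤ 0)
    (hb : n1 - l1 ≤ m ∧ l1 - n1 ≤ m ∧ n2 - l2 ≤ m ∧ l2 - n2 ≤ m ∧ n3 - l3 ≤ m ∧ l3 - n3 ≤ m)
    (hmx : n1 - l1 = m ∨ n2 - l2 = m ∨ n3 - l3 = m ∨ l1 - n1 = m ∨ l2 - n2 = m ∨ l3 - n3 = m)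
    (hm : 1 ≤ m) :
    (l2 + (-1) ≤ l1 + (1) ∧ 0 ≤ l2 + (-1) ∧ l3 + (0) ≤ 0 ∧ n1 - l1 - (1) ≤ m-1 ∧ l1 + (1) - n1 ≤ m-1 ∧ n2 - l2 - (-1) ≤ m-1 ∧ l2 + (-1) - n2 ≤ m-1 ∧ n3 - l3 - (0) ≤ m-1 ∧ l3 + (0) - n3 ≤ m-1) ∨
    (l2 + (1) ≤ l1 + (-1) ∧ 0 ≤ l2 + (1) ∧ l3 + (0) ≤ 0 ∧ n1 - l1 - (-1) ≤ m-1 ∧ l1 + (-1) - n1 ≤ m-1 ∧ n2 - l2 - (1) ≤ m-1 ∧ l2 + (1) - n2 ≤ m-1 ∧ n3 - l3 - (0) ≤ m-1 ∧ l3 + (0) - n3 ≤ m-1) ∨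
    (l2 + (1) ≤ l1 + (0) ∧ 0 ≤ l2 + (1) ∧ l3 + (-1) ≤ 0 ∧ n1 - l1 - (0) ≤ m-1 ∧ l1 + (0) - n1 ≤ m-1 ∧ n2 - l2 - (1) ≤ m-1 ∧ l2 + (1) - n2 ≤ m-1 ∧ n3 - l3 - (-1) ≤ m-1 ∧ l3 + (-1) - n3 ≤ m-1) ∨
    (l2 + (-1) ≤ l1 + (0) ∧ 0 ≤ l2 + (-1) ∧ l3 + (1) ≤ 0 ∧ n1 - l1 - (0) ≤ m-1 ∧ l1 + (0) - n1 ≤ m-1 ∧ n2 - l2 - (-1) ≤ m-1 ∧ l2 + (-1) - n2 ≤ m-1 ∧ n3 - l3 - (1) ≤ m-1 ∧ l3 + (1) - n3 ≤ m-1) ∨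
    (l2 + (0) ≤ l1 + (1) ∧ 0 ≤ l2 + (0) ∧ l3 + (-1) ≤ 0 ∧ n1 - l1 - (1) ≤ m-1 ∧ l1 + (1) - n1 ≤ m-1 ∧ n2 - l2 - (0) ≤ m-1 ∧ l2 + (0) - n2 ≤ m-1 ∧ n3 - l3 - (-1) ≤ m-1 ∧ l3 + (-1) - n3 ≤ m-1) ∨
    (l2 + (0) ≤ l1 + (-1) ∧ 0 ≤ l2 + (0) ∧ l3 + (1) ≤ 0 ∧ n1 - l1 - (-1) ≤ m-1 ∧ l1 + (-1) - n1 ≤ m-1 ∧ n2 - l2 - (0) ≤ m-1 ∧ l2 + (0) - n2 ≤ m-1 ∧ n3 - l3 - (1) ≤ m-1 ∧ l3 + (1) - n3 ≤ m-1) := by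
  rcases hmx with h|h|h|h|h|h
  · rcases (show (l2 + (-1) ≤ l1 + (1) ∧ 0 ≤ l2 + (-1) ∧ l3 + (0) ≤ 0 ∧ n1 - l1 - (1) ≤ m-1 ∧ l1 + (1) - n1 ≤ m-1 ∧ n2 - l2 - (-1) ≤ m-1 ∧ l2 + (-1) - n2 ≤ m-1 ∧ n3 - l3 - (0) ≤ m-1 ∧ l3 + (0) - n3 ≤ m-1) ∨ (l2 + (0) ≤ l1 + (1) ∧ 0 ≤ l2 + (0) ∧ l3 + (-1) ≤ 0 ∧ n1 - l1 - (1) ≤ m-1 ∧ l1 + (1) - n1 ≤ m-1 ∧ n2 - l2 - (0) ≤ m-1 ∧ l2 + (0) - n2 ≤ m-1 ∧ n3 - l3 - (-1) ≤ m-1 ∧ l3 + (-1) - n3 ≤ m-1) by omega) with h2|h2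
    · exact Or.inl h2
    · exact Or.inr (Or.inr (Or.inr (Or.inr (Or.inl h2))))
  · rcases (show (l2 + (1) ≤ l1 + (-1) ∧ 0 ≤ l2 + (1) ∧ l3 + (0) ≤ 0 ∧ n1 - l1 - (-1) ≤ m-1 ∧ l1 + (-1) - n1 ≤ m-1 ∧ n2 - l2 - (1) ≤ m-1 ∧ l2 + (1) - n2 ≤ m-1 ∧ n3 - l3 - (0) ≤ m-1 ∧ l3 + (0) - n3 ≤ m-1) ∨ (l2 + (1) ≤ l1 + (0) ∧ 0 ≤ l2 + (1) ∧ l3 + (-1) ≤ 0 ∧ n1 - l1 - (0) ≤ m-1 ∧ l1 + (0) - n1 ≤ m-1 ∧ n2 - l2 - (1) ≤ m-1 ∧ l2 + (1) - n2 ≤ m-1 ∧ n3 - l3 - (-1) ≤ m-1 ∧ l3 + (-1) - n3 ≤ m-1) by omega) with h2|h2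
    · exact Or.inr (Or.inl h2)
    · exact Or.inr (Or.inr (Or.inl h2))
  · rcases (show (l2 + (-1) ≤ l1 + (0) ∧ 0 ≤ l2 + (-1) ∧ l3 + (1) ≤ 0 ∧ n1 - l1 - (0) ≤ m-1 ∧ l1 + (0) - n1 ≤ m-1 ∧ n2 - l2 - (-1) ≤ m-1 ∧ l2 + (-1) - n2 ≤ m-1 ∧ n3 - l3 - (1) ≤ m-1 ∧ l3 + (1) - n3 ≤ m-1) ∨ (l2 + (0) ≤ l1 + (-1) ∧ 0 ≤ l2 + (0) ∧ l3 + (1) ≤ 0 ∧ n1 - l1 - (-1) ≤ m-1 ∧ l1 + (-1) - n1 ≤ m-1 ∧ n2 - l2 - (0) ≤ m-1 ∧ l2 + (0) - n2 ≤ m-1 ∧ n3 - l3 - (1) ≤ m-1 ∧ l3 + (1) - n3 ≤ m-1) by omega) with h2|h2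
    · exact Or.inr (Or.inr (Or.inr (Or.inl h2)))
    · exact Or.inr (Or.inr (Or.inr (Or.inr (Or.inr h2))))
  · rcases (show (l2 + (1) ≤ l1 + (-1) ∧ 0 ≤ l2 + (1) ∧ l3 + (0) ≤ 0 ∧ n1 - l1 - (-1) ≤ m-1 ∧ l1 + (-1) - n1 ≤ m-1 ∧ n2 - l2 - (1) ≤ m-1 ∧ l2 + (1) - n2 ≤ m-1 ∧ n3 - l3 - (0) ≤ m-1 ∧ l3 + (0) - n3 ≤ m-1) ∨ (l2 + (0) ≤ l1 + (-1) ∧ 0 ≤ l2 + (0) ∧ l3 + (1) ≤ 0 ∧ n1 - l1 - (-1) ≤ m-1 ∧ l1 + (-1) - n1 ≤ m-1 ∧ n2 - l2 - (0) ≤ m-1 ∧ l2 + (0) - n2 ≤ m-1 ∧ n3 - l3 - (1) ≤ m-1 ∧ l3 + (1) - n3 ≤ m-1) by omega) with h2|h2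
    · exact Or.inr (Or.inl h2)
    · exact Or.inr (Or.inr (Or.inr (Or.inr (Or.inr h2))))
  · rcases (show (l2 + (-1) ≤ l1 + (1) ∧ 0 ≤ l2 + (-1) ∧ l3 + (0) ≤ 0 ∧ n1 - l1 - (1) ≤ m-1 ∧ l1 + (1) - n1 ≤ m-1 ∧ n2 - l2 - (-1) ≤ m-1 ∧ l2 + (-1) - n2 ≤ m-1 ∧ n3 - l3 - (0) ≤ m-1 ∧ l3 + (0) - n3 ≤ m-1) ∨ (l2 + (-1) ≤ l1 + (0) ∧ 0 ≤ l2 + (-1) ∧ l3 + (1) ≤ 0 ∧ n1 - l1 - (0) ≤ m-1 ∧ l1 + (0) - n1 ≤ m-1 ∧ n2 - l2 - (-1) ≤ m-1 ∧ l2 + (-1) - n2 ≤ m-1 ∧ n3 - l3 - (1) ≤ m-1 ∧ l3 + (1) - n3 ≤ m-1) by omega) with h2|h2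
    · exact Or.inl h2
    · exact Or.inr (Or.inr (Or.inr (Or.inl h2)))
  · rcases (show (l2 + (1) ≤ l1 + (0) ∧ 0 ≤ l2 + (1) ∧ l3 + (-1) ≤ 0 ∧ n1 - l1 - (0) ≤ m-1 ∧ l1 + (0) - n1 ≤ m-1 ∧ n2 - l2 - (1) ≤ m-1 ∧ l2 + (1) - n2 ≤ m-1 ∧ n3 - l3 - (-1) ≤ m-1 ∧ l3 + (-1) - n3 ≤ m-1) ∨ (l2 + (0) ≤ l1 + (1) ∧ 0 ≤ l2 + (0) ∧ l3 + (-1) ≤ 0 ∧ n1 - l1 - (1) ≤ m-1 ∧ l1 + (1) - n1 ≤ m-1 ∧ n2 - l2 - (0) ≤ m-1 ∧ l2 + (0) - n2 ≤ m-1 ∧ n3 - l3 - (-1) ≤ m-1 ∧ l3 + (-1) - n3 ≤ m-1) by omega) with h2|h2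
    · exact Or.inr (Or.inr (Or.inl h2))
    · exact Or.inr (Or.inr (Or.inr (Or.inr (Or.inl h2))))

-- ===== reflections permute the short roots =====
set_option maxHeartbeats 8000000 in
theorem g2ReflShort : ∀ α ∈ g2Roots, ∀ β ∈ g2ShortRoots,
    ∃ γ ∈ g2ShortRoots, g2Reflection (g2toQ α) (g2toQ β) = g2toQ γ := by
  intro α hα β hβ
  simp only [g2Roots, g2ShortRoots, g2LongRoots, Set.mem_union, Set.mem_insert_iff,
    Set.mem_singleton_iff] at hα hβ
  rcases hα with ((rfl|rfl|rfl|rfl|rfl|rfl)|(rfl|rfl|rfl|rfl|rfl|rfl)) <;>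
    rcases hβ with (rfl|rfl|rfl|rfl|rfl|rfl)
  · exact ⟨((-1), (1), (0)), by simp [g2ShortRoots], by norm_num [g2Reflection, g2ipQ, g2toQ, Prod.ext_iff, Prod.smul_def]⟩
  · exact ⟨((1), (-1), (0)), by simp [g2ShortRoots], by norm_num [g2Reflection, g2ipQ, g2toQ, Prod.ext_iff, Prod.smul_def]⟩
  · exact ⟨((1), (0), (-1)), by simp [g2ShortRoots], by norm_num [g2Reflection, g2ipQ, g2toQ, Prod.ext_iff, Prod.smul_def]⟩
  · exact ⟨((-1), (0), (1)), by simp [g2ShortRoots], by norm_num [g2Reflection, g2ipQ, g2toQ, Prod.ext_iff, Prod.smul_def]⟩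
  · exact ⟨((0), (1), (-1)), by simp [g2ShortRoots], by norm_num [g2Reflection, g2ipQ, g2toQ, Prod.ext_iff, Prod.smul_def]⟩
  · exact ⟨((0), (-1), (1)), by simp [g2ShortRoots], by norm_num [g2Reflection, g2ipQ, g2toQ, Prod.ext_iff, Prod.smul_def]⟩
  · exact ⟨((-1), (1), (0)), by simp [g2ShortRoots], by norm_num [g2Reflection, g2ipQ, g2toQ, Prod.ext_iff, Prod.smul_def]⟩
  · exact ⟨((1), (-1), (0)), by simp [g2ShortRoots], by norm_num [g2Reflection, g2ipQ, g2toQ, Prod.ext_iff, Prod.smul_def]⟩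
  · exact ⟨((1), (0), (-1)), by simp [g2ShortRoots], by norm_num [g2Reflection, g2ipQ, g2toQ, Prod.ext_iff, Prod.smul_def]⟩
  · exact ⟨((-1), (0), (1)), by simp [g2ShortRoots], by norm_num [g2Reflection, g2ipQ, g2toQ, Prod.ext_iff, Prod.smul_def]⟩
  · exact ⟨((0), (1), (-1)), by simp [g2ShortRoots], by norm_num [g2Reflection, g2ipQ, g2toQ, Prod.ext_iff, Prod.smul_def]⟩
  · exact ⟨((0), (-1), (1)), by simp [g2ShortRoots], by norm_num [g2Reflection, g2ipQ, g2toQ, Prod.ext_iff, Prod.smul_def]⟩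
  · exact ⟨((1), (0), (-1)), by simp [g2ShortRoots], by norm_num [g2Reflection, g2ipQ, g2toQ, Prod.ext_iff, Prod.smul_def]⟩
  · exact ⟨((-1), (0), (1)), by simp [g2ShortRoots], by norm_num [g2Reflection, g2ipQ, g2toQ, Prod.ext_iff, Prod.smul_def]⟩
  · exact ⟨((0), (-1), (1)), by simp [g2ShortRoots], by norm_num [g2Reflection, g2ipQ, g2toQ, Prod.ext_iff, Prod.smul_def]⟩
  · exact ⟨((0), (1), (-1)), by simp [g2ShortRoots], by norm_num [g2Reflection, g2ipQ, g2toQ, Prod.ext_iff, Prod.smul_def]⟩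
  · exact ⟨((1), (-1), (0)), by simp [g2ShortRoots], by norm_num [g2Reflection, g2ipQ, g2toQ, Prod.ext_iff, Prod.smul_def]⟩
  · exact ⟨((-1), (1), (0)), by simp [g2ShortRoots], by norm_num [g2Reflection, g2ipQ, g2toQ, Prod.ext_iff, Prod.smul_def]⟩
  · exact ⟨((1), (0), (-1)), by simp [g2ShortRoots], by norm_num [g2Reflection, g2ipQ, g2toQ, Prod.ext_iff, Prod.smul_def]⟩
  · exact ⟨((-1), (0), (1)), by simp [g2ShortRoots], by norm_num [g2Reflection, g2ipQ, g2toQ, Prod.ext_iff, Prod.smul_def]⟩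
  · exact ⟨((0), (-1), (1)), by simp [g2ShortRoots], by norm_num [g2Reflection, g2ipQ, g2toQ, Prod.ext_iff, Prod.smul_def]⟩
  · exact ⟨((0), (1), (-1)), by simp [g2ShortRoots], by norm_num [g2Reflection, g2ipQ, g2toQ, Prod.ext_iff, Prod.smul_def]⟩
  · exact ⟨((1), (-1), (0)), by simp [g2ShortRoots], by norm_num [g2Reflection, g2ipQ, g2toQ, Prod.ext_iff, Prod.smul_def]⟩
  · exact ⟨((-1), (1), (0)), by simp [g2ShortRoots], by norm_num [g2Reflection, g2ipQ, g2toQ, Prod.ext_iff, Prod.smul_def]⟩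
  · exact ⟨((0), (-1), (1)), by simp [g2ShortRoots], by norm_num [g2Reflection, g2ipQ, g2toQ, Prod.ext_iff, Prod.smul_def]⟩
  · exact ⟨((0), (1), (-1)), by simp [g2ShortRoots], by norm_num [g2Reflection, g2ipQ, g2toQ, Prod.ext_iff, Prod.smul_def]⟩
  · exact ⟨((-1), (1), (0)), by simp [g2ShortRoots], by norm_num [g2Reflection, g2ipQ, g2toQ, Prod.ext_iff, Prod.smul_def]⟩
  · exact ⟨((1), (-1), (0)), by simp [g2ShortRoots], by norm_num [g2Reflection, g2ipQ, g2toQ, Prod.ext_iff, Prod.smul_def]⟩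
  · exact ⟨((-1), (0), (1)), by simp [g2ShortRoots], by norm_num [g2Reflection, g2ipQ, g2toQ, Prod.ext_iff, Prod.smul_def]⟩
  · exact ⟨((1), (0), (-1)), by simp [g2ShortRoots], by norm_num [g2Reflection, g2ipQ, g2toQ, Prod.ext_iff, Prod.smul_def]⟩
  · exact ⟨((0), (-1), (1)), by simp [g2ShortRoots], by norm_num [g2Reflection, g2ipQ, g2toQ, Prod.ext_iff, Prod.smul_def]⟩
  · exact ⟨((0), (1), (-1)), by simp [g2ShortRoots], by norm_num [g2Reflection, g2ipQ, g2toQ, Prod.ext_iff, Prod.smul_def]⟩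
  · exact ⟨((-1), (1), (0)), by simp [g2ShortRoots], by norm_num [g2Reflection, g2ipQ, g2toQ, Prod.ext_iff, Prod.smul_def]⟩
  · exact ⟨((1), (-1), (0)), by simp [g2ShortRoots], by norm_num [g2Reflection, g2ipQ, g2toQ, Prod.ext_iff, Prod.smul_def]⟩
  · exact ⟨((-1), (0), (1)), by simp [g2ShortRoots], by norm_num [g2Reflection, g2ipQ, g2toQ, Prod.ext_iff, Prod.smul_def]⟩
  · exact ⟨((1), (0), (-1)), by simp [g2ShortRoots], by norm_num [g2Reflection, g2ipQ, g2toQ, Prod.ext_iff, Prod.smul_def]⟩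
  · exact ⟨((-1), (0), (1)), by simp [g2ShortRoots], by norm_num [g2Reflection, g2ipQ, g2toQ, Prod.ext_iff, Prod.smul_def]⟩
  · exact ⟨((1), (0), (-1)), by simp [g2ShortRoots], by norm_num [g2Reflection, g2ipQ, g2toQ, Prod.ext_iff, Prod.smul_def]⟩
  · exact ⟨((0), (1), (-1)), by simp [g2ShortRoots], by norm_num [g2Reflection, g2ipQ, g2toQ, Prod.ext_iff, Prod.smul_def]⟩
  · exact ⟨((0), (-1), (1)), by simp [g2ShortRoots], by norm_num [g2Reflection, g2ipQ, g2toQ, Prod.ext_iff, Prod.smul_def]⟩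
  · exact ⟨((-1), (1), (0)), by simp [g2ShortRoots], by norm_num [g2Reflection, g2ipQ, g2toQ, Prod.ext_iff, Prod.smul_def]⟩
  · exact ⟨((1), (-1), (0)), by simp [g2ShortRoots], by norm_num [g2Reflection, g2ipQ, g2toQ, Prod.ext_iff, Prod.smul_def]⟩
  · exact ⟨((-1), (0), (1)), by simp [g2ShortRoots], by norm_num [g2Reflection, g2ipQ, g2toQ, Prod.ext_iff, Prod.smul_def]⟩
  · exact ⟨((1), (0), (-1)), by simp [g2ShortRoots], by norm_num [g2Reflection, g2ipQ, g2toQ, Prod.ext_iff, Prod.smul_def]⟩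
  · exact ⟨((0), (1), (-1)), by simp [g2ShortRoots], by norm_num [g2Reflection, g2ipQ, g2toQ, Prod.ext_iff, Prod.smul_def]⟩
  · exact ⟨((0), (-1), (1)), by simp [g2ShortRoots], by norm_num [g2Reflection, g2ipQ, g2toQ, Prod.ext_iff, Prod.smul_def]⟩
  · exact ⟨((-1), (1), (0)), by simp [g2ShortRoots], by norm_num [g2Reflection, g2ipQ, g2toQ, Prod.ext_iff, Prod.smul_def]⟩
  · exact ⟨((1), (-1), (0)), by simp [g2ShortRoots], by norm_num [g2Reflection, g2ipQ, g2toQ, Prod.ext_iff, Prod.smul_def]⟩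
  · exact ⟨((0), (1), (-1)), by simp [g2ShortRoots], by norm_num [g2Reflection, g2ipQ, g2toQ, Prod.ext_iff, Prod.smul_def]⟩
  · exact ⟨((0), (-1), (1)), by simp [g2ShortRoots], by norm_num [g2Reflection, g2ipQ, g2toQ, Prod.ext_iff, Prod.smul_def]⟩
  · exact ⟨((1), (-1), (0)), by simp [g2ShortRoots], by norm_num [g2Reflection, g2ipQ, g2toQ, Prod.ext_iff, Prod.smul_def]⟩
  · exact ⟨((-1), (1), (0)), by simp [g2ShortRoots], by norm_num [g2Reflection, g2ipQ, g2toQ, Prod.ext_iff, Prod.smul_def]⟩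
  · exact ⟨((1), (0), (-1)), by simp [g2ShortRoots], by norm_num [g2Reflection, g2ipQ, g2toQ, Prod.ext_iff, Prod.smul_def]⟩
  · exact ⟨((-1), (0), (1)), by simp [g2ShortRoots], by norm_num [g2Reflection, g2ipQ, g2toQ, Prod.ext_iff, Prod.smul_def]⟩
  · exact ⟨((0), (1), (-1)), by simp [g2ShortRoots], by norm_num [g2Reflection, g2ipQ, g2toQ, Prod.ext_iff, Prod.smul_def]⟩
  · exact ⟨((0), (-1), (1)), by simp [g2ShortRoots], by norm_num [g2Reflection, g2ipQ, g2toQ, Prod.ext_iff, Prod.smul_def]⟩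
  · exact ⟨((1), (-1), (0)), by simp [g2ShortRoots], by norm_num [g2Reflection, g2ipQ, g2toQ, Prod.ext_iff, Prod.smul_def]⟩
  · exact ⟨((-1), (1), (0)), by simp [g2ShortRoots], by norm_num [g2Reflection, g2ipQ, g2toQ, Prod.ext_iff, Prod.smul_def]⟩
  · exact ⟨((1), (0), (-1)), by simp [g2ShortRoots], by norm_num [g2Reflection, g2ipQ, g2toQ, Prod.ext_iff, Prod.smul_def]⟩
  · exact ⟨((-1), (0), (1)), by simp [g2ShortRoots], by norm_num [g2Reflection, g2ipQ, g2toQ, Prod.ext_iff, Prod.smul_def]⟩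
  · exact ⟨((1), (-1), (0)), by simp [g2ShortRoots], by norm_num [g2Reflection, g2ipQ, g2toQ, Prod.ext_iff, Prod.smul_def]⟩
  · exact ⟨((-1), (1), (0)), by simp [g2ShortRoots], by norm_num [g2Reflection, g2ipQ, g2toQ, Prod.ext_iff, Prod.smul_def]⟩
  · exact ⟨((-1), (0), (1)), by simp [g2ShortRoots], by norm_num [g2Reflection, g2ipQ, g2toQ, Prod.ext_iff, Prod.smul_def]⟩
  · exact ⟨((1), (0), (-1)), by simp [g2ShortRoots], by norm_num [g2Reflection, g2ipQ, g2toQ, Prod.ext_iff, Prod.smul_def]⟩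
  · exact ⟨((0), (-1), (1)), by simp [g2ShortRoots], by norm_num [g2Reflection, g2ipQ, g2toQ, Prod.ext_iff, Prod.smul_def]⟩
  · exact ⟨((0), (1), (-1)), by simp [g2ShortRoots], by norm_num [g2Reflection, g2ipQ, g2toQ, Prod.ext_iff, Prod.smul_def]⟩
  · exact ⟨((1), (-1), (0)), by simp [g2ShortRoots], by norm_num [g2Reflection, g2ipQ, g2toQ, Prod.ext_iff, Prod.smul_def]⟩
  · exact ⟨((-1), (1), (0)), by simp [g2ShortRoots], by norm_num [g2Reflection, g2ipQ, g2toQ, Prod.ext_iff, Prod.smul_def]⟩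
  · exact ⟨((-1), (0), (1)), by simp [g2ShortRoots], by norm_num [g2Reflection, g2ipQ, g2toQ, Prod.ext_iff, Prod.smul_def]⟩
  · exact ⟨((1), (0), (-1)), by simp [g2ShortRoots], by norm_num [g2Reflection, g2ipQ, g2toQ, Prod.ext_iff, Prod.smul_def]⟩
  · exact ⟨((0), (-1), (1)), by simp [g2ShortRoots], by norm_num [g2Reflection, g2ipQ, g2toQ, Prod.ext_iff, Prod.smul_def]⟩
  · exact ⟨((0), (1), (-1)), by simp [g2ShortRoots], by norm_num [g2Reflection, g2ipQ, g2toQ, Prod.ext_iff, Prod.smul_def]⟩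

-- ===== the sup-norm on the weight lattice =====
/-- The sup-norm of a lattice vector. -/
def g2Sup (v : G2W) : ℤ :=
  max v.1 (max v.2.1 (max v.2.2 (max (-v.1) (max (-v.2.1) (-v.2.2)))))

theorem g2shortFacts (u : G2W) (h : u ∈ g2ShortRoots) :
    (u.1 = 1 ∧ u.2.1 = -1 ∧ u.2.2 = 0) ∨ (u.1 = -1 ∧ u.2.1 = 1 ∧ u.2.2 = 0) ∨
    (u.1 = 0 ∧ u.2.1 = 1 ∧ u.2.2 = -1) ∨ (u.1 = 0 ∧ u.2.1 = -1 ∧ u.2.2 = 1) ∨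
    (u.1 = 1 ∧ u.2.1 = 0 ∧ u.2.2 = -1) ∨ (u.1 = -1 ∧ u.2.1 = 0 ∧ u.2.2 = 1) := by
  simp only [g2ShortRoots, Set.mem_insert_iff, Set.mem_singleton_iff] at h
  rcases h with rfl|rfl|rfl|rfl|rfl|rfl <;> norm_num

theorem g2StepMid (lam nu : G2W) (hlam : G2Dominant lam) (hnu : G2Dominant nu)
    (m u1 u2 u3 : ℤ) (hu : ((u1, u2, u3) : G2W) ∈ g2ShortRoots)
    (hsup : g2Sup (nu - lam) = m)
    (h : lam.2.1 + u2 ≤ lam.1 + u1 ∧ 0 ≤ lam.2.1 + u2 ∧ lam.2.2 + u3 ≤ 0 ∧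
      nu.1 - lam.1 - u1 ≤ m - 1 ∧ lam.1 + u1 - nu.1 ≤ m - 1 ∧
      nu.2.1 - lam.2.1 - u2 ≤ m - 1 ∧ lam.2.1 + u2 - nu.2.1 ≤ m - 1 ∧
      nu.2.2 - lam.2.2 - u3 ≤ m - 1 ∧ lam.2.2 + u3 - nu.2.2 ≤ m - 1) :
    ∃ delta : G2W, G2Edge lam delta ∧ g2Sup (nu - delta) = m - 1 := by
  obtain ⟨hl0, hl1, hl2, hl3⟩ := hlam
  have hf := g2shortFacts _ hu
  have husum : u1 + u2 + u3 = 0 ∧ -1 ≤ u1 ∧ u1 ≤ 1 ∧ -1 ≤ u2 ∧ u2 ≤ 1 ∧ -1 ≤ u3 ∧ u3 ≤ 1 := by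
    rcases hf with h'|h'|h'|h'|h'|h' <;>
      (obtain ⟨a1, a2, a3⟩ := h'; dsimp only at a1 a2 a3; omega)
  refine ⟨(lam.1 + u1, lam.2.1 + u2, lam.2.2 + u3),
    ⟨⟨hl0, hl1, hl2, hl3⟩,
      ⟨show lam.1 + u1 + (lam.2.1 + u2) + (lam.2.2 + u3) = 0 by omega,
       show lam.2.1 + u2 ≤ lam.1 + u1 by omega,
       show (0:ℤ) ≤ lam.2.1 + u2 by omega,
       show lam.2.2 + u3 ≤ (0:ℤ) by omega⟩, Or.inl ?_⟩, ?_⟩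
  · have : ((lam.1 + u1, lam.2.1 + u2, lam.2.2 + u3) : G2W) - lam = ((u1, u2, u3) : G2W) := by
      simp [Prod.ext_iff]
    rwa [this]
  · have hsup' : max (nu.1 - lam.1) (max (nu.2.1 - lam.2.1) (max (nu.2.2 - lam.2.2)
        (max (-(nu.1 - lam.1)) (max (-(nu.2.1 - lam.2.1)) (-(nu.2.2 - lam.2.2)))))) = m := hsup
    show max (nu.1 - (lam.1 + u1)) (max (nu.2.1 - (lam.2.1 + u2)) (max (nu.2.2 - (lam.2.2 + u3))
        (max (-(nu.1 - (lam.1 + u1))) (max (-(nu.2.1 - (lam.2.1 + u2)))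
          (-(nu.2.2 - (lam.2.2 + u3))))))) = m - 1
    omega

theorem g2StepEx (lam nu : G2W) (hlam : G2Dominant lam) (hnu : G2Dominant nu)
    (hm : 1 ≤ g2Sup (nu - lam)) :
    ∃ delta : G2W, G2Edge lam delta ∧ g2Sup (nu - delta) = g2Sup (nu - lam) - 1 := by
  set m := g2Sup (nu - lam) with hmdef
  have hmax : m = max (nu.1 - lam.1) (max (nu.2.1 - lam.2.1) (max (nu.2.2 - lam.2.2)
      (max (-(nu.1 - lam.1)) (max (-(nu.2.1 - lam.2.1)) (-(nu.2.2 - lam.2.2)))))) := by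
    simp only [hmdef, g2Sup, Prod.fst_sub, Prod.snd_sub]
  obtain ⟨hl0, hl1, hl2, hl3⟩ := hlam
  obtain ⟨hn0, hn1, hn2, hn3⟩ := hnu
  have core := g2StepCore lam.1 lam.2.1 lam.2.2 nu.1 nu.2.1 nu.2.2 m
    ⟨hl0, hl1, hl2, hl3⟩ ⟨hn0, hn1, hn2, hn3⟩ (by omega) (by omega) hm
  rcases core with h|h|h|h|h|h <;>
    exact g2StepMid lam nu ⟨hl0, hl1, hl2, hl3⟩ ⟨hn0, hn1, hn2, hn3⟩ m _ _ _
      (by simp [g2ShortRoots]) hmdef.symm h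

theorem g2ExistsPath : ∀ (m : ℕ) (lam nu : G2W), G2Dominant lam → G2Dominant nu →
    g2Sup (nu - lam) = (m : ℤ) → ∃ t : ℕ → G2W, G2IsPath t m lam nu := by
  intro m
  induction m with
  | zero =>
    intro lam nu hl hn h0
    simp only [g2Sup, Prod.fst_sub, Prod.snd_sub] at h0
    have : nu = lam := by
      rw [Prod.ext_iff, Prod.ext_iff]; refine ⟨by omega, by omega, by omega⟩
    exact ⟨fun _ => lam, rfl, by rw [this], fun i hi => absurd hi (Nat.not_lt_zero i)⟩
  | succ m ih =>
    intro lam nu hl hn hsup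
    obtain ⟨delta, hedge, hsup'⟩ := g2StepEx lam nu hl hn (by omega)
    obtain ⟨t', h0', hn', he'⟩ := ih delta nu hedge.2.1 hn (by push_cast at hsup ⊢; omega)
    refine ⟨fun i => match i with | 0 => lam | (j+1) => t' j, rfl, hn', ?_⟩
    intro i hi
    match i with
    | 0 => simpa [h0'] using hedge
    | (j+1) => exact he' j (by omega)

-- ===== additive maps =====
theorem g2AddZero (w : G2Q → G2Q) (hadd : ∀ x y, w (x + y) = w x + w y) : w 0 = 0 := by
  have h := hadd 0 0
  rw [add_zero] at h
  exact (left_eq_add.mp h)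

theorem g2AddNsmul (w : G2Q → G2Q) (hadd : ∀ x y, w (x + y) = w x + w y) :
    ∀ (k : ℕ) (x : G2Q), w (k • x) = k • w x := by
  intro k x
  induction k with
  | zero => simp [g2AddZero w hadd]
  | succ k ihk => rw [succ_nsmul, succ_nsmul, hadd, ihk]

-- ===== g2toQ is an injective additive embedding =====
theorem g2toQ_sub (x y : G2W) : g2toQ (x - y) = g2toQ x - g2toQ y := by
  simp only [g2toQ, Prod.fst_sub, Prod.snd_sub, Prod.ext_iff]
  push_cast
  exact ⟨rfl, rfl, rfl⟩

theorem g2toQ_add (x y : G2W) : g2toQ (x + y) = g2toQ x + g2toQ y := by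
  simp only [g2toQ, Prod.fst_add, Prod.snd_add, Prod.ext_iff]
  push_cast
  exact ⟨rfl, rfl, rfl⟩

theorem g2toQ_nsmul (k : ℕ) (x : G2W) : g2toQ (k • x) = k • g2toQ x := by
  induction k with
  | zero => simp [g2toQ, Prod.ext_iff]
  | succ k ihk => rw [succ_nsmul, succ_nsmul, g2toQ_add, ihk]

theorem g2toQ_inj {x y : G2W} (h : g2toQ x = g2toQ y) : x = y := by
  simp only [g2toQ, Prod.ext_iff] at h ⊢
  exact_mod_cast h

-- ===== the Weyl group: additivity, permuting short roots, invertibility =====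
def G2Add (w : G2Q → G2Q) : Prop := ∀ x y, w (x + y) = w x + w y

def G2Short (w : G2Q → G2Q) : Prop :=
  ∀ β ∈ g2ShortRoots, ∃ γ ∈ g2ShortRoots, w (g2toQ β) = g2toQ γ

def G2Good (w : G2Q → G2Q) : Prop :=
  G2Add w ∧ G2Short w ∧ ∃ w' : G2Q → G2Q, G2Add w' ∧ G2Short w' ∧ ∀ x, w' (w x) = x

theorem g2ReflAdd (a : G2Q) : G2Add (g2Reflection a) := by
  intro x y
  obtain ⟨a1, a2, a3⟩ := a
  obtain ⟨x1, x2, x3⟩ := x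
  obtain ⟨y1, y2, y3⟩ := y
  simp only [g2Reflection, g2ipQ, Prod.mk_add_mk, Prod.smul_mk, Prod.mk_sub_mk,
    smul_eq_mul, Prod.ext_iff]
  refine ⟨by ring, by ring, by ring⟩

theorem g2ReflInvol (a : G2Q) (ha : g2ipQ a a ≠ 0) :
    ∀ x, g2Reflection a (g2Reflection a x) = x := by
  intro x
  obtain ⟨a1, a2, a3⟩ := a
  obtain ⟨x1, x2, x3⟩ := x
  simp only [g2ipQ] at ha
  have ha' : a1 ^ 2 + a2 ^ 2 + a3 ^ 2 ≠ 0 := by simpa [sq] using ha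
  simp only [g2Reflection, g2ipQ, Prod.smul_mk, Prod.mk_sub_mk, smul_eq_mul, Prod.ext_iff]
  refine ⟨?_, ?_, ?_⟩ <;> field_simp <;> ring

theorem g2RootIp : ∀ α ∈ g2Roots, g2ipQ (g2toQ α) (g2toQ α) ≠ 0 := by
  intro α hα
  simp only [g2Roots, g2ShortRoots, g2LongRoots, Set.mem_union, Set.mem_insert_iff,
    Set.mem_singleton_iff] at hα
  rcases hα with ((rfl|rfl|rfl|rfl|rfl|rfl)|(rfl|rfl|rfl|rfl|rfl|rfl)) <;>
    norm_num [g2ipQ, g2toQ]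

theorem g2WeylGood : ∀ w ∈ g2Weyl, G2Good (w : G2Q → G2Q) := by
  intro w hw
  induction hw using Submonoid.closure_induction with
  | mem f hf =>
    obtain ⟨α, hα, rfl⟩ := hf
    exact ⟨g2ReflAdd _, fun β hβ => g2ReflShort α hα β hβ,
      g2Reflection (g2toQ α), g2ReflAdd _, fun β hβ => g2ReflShort α hα β hβ,
      g2ReflInvol _ (g2RootIp α hα)⟩
  | one =>
    exact ⟨fun x y => rfl, fun β hβ => ⟨β, hβ, rfl⟩, id, fun x y => rfl,
      fun β hβ => ⟨β, hβ, rfl⟩, fun x => rfl⟩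
  | mul f g hfm hgm hf hg =>
    obtain ⟨hfa, hfs, f', hf'a, hf's, hf'i⟩ := hf
    obtain ⟨hga, hgs, g', hg'a, hg's, hg'i⟩ := hg
    refine ⟨fun x y => ?_, fun β hβ => ?_, g' ∘ f', fun x y => ?_, fun β hβ => ?_, fun x => ?_⟩
    · show f (g (x + y)) = f (g x) + f (g y)
      rw [hga, hfa]
    · obtain ⟨γ, hγ, hγe⟩ := hgs β hβ
      obtain ⟨γ', hγ', hγ'e⟩ := hfs γ hγ
      exact ⟨γ', hγ', by show f (g _) = _; rw [hγe, hγ'e]⟩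
    · show g' (f' (x + y)) = g' (f' x) + g' (f' y)
      rw [hf'a, hg'a]
    · obtain ⟨γ, hγ, hγe⟩ := hf's β hβ
      obtain ⟨γ', hγ', hγ'e⟩ := hg's γ hγ
      exact ⟨γ', hγ', by show g' (f' _) = _; rw [hγe, hγ'e]⟩
    · show g' (f' ((f * g) x)) = x
      have : (f * g) x = f (g x) := rfl
      rw [this, hf'i, hg'i]

-- ===== lower bound =====
theorem g2Lower (w : G2Q → G2Q) (hadd : G2Add w) (hshort : G2Short w)
    (n : ℕ) (t : ℕ → G2W) (lam nu mu : G2W) (hp : G2IsPath t n lam nu)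
    (hmu : g2toQ mu = w (g2toQ nu - g2toQ lam)) :
    mu.1 + mu.2.1 ≤ (n : ℤ) := by
  obtain ⟨h0, hn, he⟩ := hp
  have key : ∀ i, i ≤ n →
      (w (g2toQ (t i - t 0))).1 + (w (g2toQ (t i - t 0))).2.1 ≤ (i : ℚ) := by
    intro i
    induction i with
    | zero =>
      intro _
      have : t 0 - t 0 = (0 : G2W) := sub_self _
      rw [this]
      have h2 : g2toQ 0 = (0 : G2Q) := by simp [g2toQ, Prod.ext_iff]
      rw [h2, g2AddZero w hadd]
      norm_num
    | succ i ihi =>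
      intro hle
      have hi : i < n := by omega
      have hedge := he i hi
      have hsplit : g2toQ (t (i+1) - t 0) = g2toQ (t i - t 0) + g2toQ (t (i+1) - t i) := by
        rw [g2toQ_sub, g2toQ_sub, g2toQ_sub]
        abel
      rcases hedge.2.2 with hs | ⟨heq, _⟩
      · obtain ⟨γ, hγ, hγe⟩ := hshort _ hs
        rw [hsplit, hadd, hγe]
        have hb : γ.1 + γ.2.1 ≤ 1 := by
          rcases g2shortFacts γ hγ with h'|h'|h'|h'|h'|h' <;> omega
        have hY : (g2toQ γ).1 + (g2toQ γ).2.1 ≤ (1:ℚ) := by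
          show (γ.1 : ℚ) + (γ.2.1 : ℚ) ≤ (1:ℚ)
          exact_mod_cast hb
        have hX := ihi (by omega)
        simp only [Prod.fst_add, Prod.snd_add]
        push_cast
        linarith
      · have : t (i + 1) - t 0 = t i - t 0 := by rw [heq]
        rw [this]
        have := ihi (by omega)
        push_cast
        linarith
  have hk := key n le_rfl
  rw [hn, h0, g2toQ_sub, ← hmu] at hk
  have : ((mu.1 + mu.2.1 : ℤ) : ℚ) ≤ (n : ℚ) := by
    simpa [g2toQ] using hk
  exact_mod_cast this

-- ===== upper bound: sup-norm ≤ μ₁ + μ₂ =====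
theorem g2Decomp (mu : G2W) (hmu : G2Dominant mu) :
    mu = (mu.1.toNat) • ((1, 0, -1) : G2W) + (mu.2.1.toNat) • ((0, 1, -1) : G2W) := by
  obtain ⟨h0, h1, h2, h3⟩ := hmu
  rw [Prod.ext_iff, Prod.ext_iff]
  simp only [Prod.smul_mk, Prod.mk_add_mk, nsmul_eq_mul]
  refine ⟨by omega, by omega, by omega⟩

theorem g2Upper (lam nu mu : G2W) (hmu : G2Dominant mu)
    (w' : G2Q → G2Q) (hadd : G2Add w') (hshort : G2Short w')
    (hdec : g2toQ (nu - lam) = w' (g2toQ mu)) :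
    g2Sup (nu - lam) ≤ mu.1 + mu.2.1 := by
  obtain ⟨γ1, hγ1, hg1⟩ := hshort ((1, 0, -1) : G2W) (by simp [g2ShortRoots])
  obtain ⟨γ2, hγ2, hg2⟩ := hshort ((0, 1, -1) : G2W) (by simp [g2ShortRoots])
  set p := mu.1.toNat with hp
  set q := mu.2.1.toNat with hq
  have hdecomp : g2toQ mu = p • g2toQ ((1, 0, -1) : G2W) + q • g2toQ ((0, 1, -1) : G2W) := by
    conv_lhs => rw [g2Decomp mu hmu]
    rw [g2toQ_add, g2toQ_nsmul, g2toQ_nsmul]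
  have hv : g2toQ (nu - lam) = g2toQ (p • γ1 + q • γ2) := by
    rw [hdec, hdecomp, hadd, g2AddNsmul w' hadd, g2AddNsmul w' hadd, hg1, hg2,
      g2toQ_add, g2toQ_nsmul, g2toQ_nsmul]
  have hveq : nu - lam = p • γ1 + q • γ2 := g2toQ_inj hv
  have hc1 : (nu - lam).1 = (p : ℤ) * γ1.1 + (q : ℤ) * γ2.1 := by
    rw [hveq, Prod.fst_add]; simp [nsmul_eq_mul]
  have hc2 : (nu - lam).2.1 = (p : ℤ) * γ1.2.1 + (q : ℤ) * γ2.2.1 := by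
    rw [hveq, Prod.snd_add, Prod.fst_add]; simp [nsmul_eq_mul]
  have hc3 : (nu - lam).2.2 = (p : ℤ) * γ1.2.2 + (q : ℤ) * γ2.2.2 := by
    rw [hveq, Prod.snd_add, Prod.snd_add]; simp [nsmul_eq_mul]
  obtain ⟨hm0, hm1, hm2, hm3⟩ := hmu
  have hpv : (p : ℤ) = mu.1 := by omega
  have hqv : (q : ℤ) = mu.2.1 := by omega
  simp only [g2Sup]
  rcases g2shortFacts γ1 hγ1 with h'|h'|h'|h'|h'|h' <;>
    rcases g2shortFacts γ2 hγ2 with h''|h''|h''|h''|h''|h'' <;>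
      (obtain ⟨a1, a2, a3⟩ := h'; obtain ⟨b1, b2, b3⟩ := h'';
       rw [a1, b1] at hc1; rw [a2, b2] at hc2; rw [a3, b3] at hc3; omega)

/-- for dominant `G₂` weights `λ`, `ν` and a Weyl group element
`w` with `w(ν - λ)` dominant (say `w(ν - λ) = μ` with `μ` a dominant lattice
weight), there exists a path from `λ` to `ν`, and the minimal length of a path
from `λ` to `ν` equals `μ₁ + μ₂ = (w(ν-λ))₁ + (w(ν-λ))₂`, the minimal length
of a path from `0` to `w(ν - λ)`. -/
theorem stmt6 (lam nu mu : G2W) (hlam : G2Dominant lam) (hnu : G2Dominant nu)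
    (w : Function.End G2Q) (hw : w ∈ g2Weyl)
    (hmu : G2Dominant mu) (hwmu : g2toQ mu = w (g2toQ nu - g2toQ lam)) :
    (∃ t : ℕ → G2W, G2IsPath t (mu.1 + mu.2.1).toNat lam nu) ∧
      ∀ (n : ℕ) (t : ℕ → G2W), G2IsPath t n lam nu →
        (mu.1 + mu.2.1).toNat ≤ n := by
  obtain ⟨hwa, hws, w', hw'a, hw's, hw'i⟩ := g2WeylGood w hw
  have hdec : g2toQ (nu - lam) = w' (g2toQ mu) := by
    rw [hwmu, hw'i]
    exact g2toQ_sub nu lam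
  have hupper := g2Upper lam nu mu hmu w' hw'a hw's hdec
  have hsup0 : 0 ≤ g2Sup (nu - lam) := by
    simp only [g2Sup, Prod.fst_sub, Prod.snd_sub]; omega
  obtain ⟨t0, ht0⟩ := g2ExistsPath (g2Sup (nu - lam)).toNat lam nu hlam hnu (by omega)
  have hlow0 := g2Lower w hwa hws _ t0 lam nu mu ht0 hwmu
  have hmu1 : 0 ≤ mu.2.1 := hmu.2.2.1
  have hmu2 : mu.2.1 ≤ mu.1 := hmu.2.1
  have heq : (mu.1 + mu.2.1).toNat = (g2Sup (nu - lam)).toNat := by omega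
  constructor
  · rw [heq]; exact ⟨t0, ht0⟩
  · intro n t hp
    have := g2Lower w hwa hws n t lam nu mu hp hwmu
    omega
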